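/- Let R be a commutative noetherian ring and let X and Y be finitely generated reflexive R-modules with Ext^1_R(X, R) = 0 and Ext^1_R(Y, R) = 0. Suppose there exist short exact sequences 0 → X* → P → X → 0 and 0 → Y* → Q → Y → 0 of R-modules with P and Q finitely generated free, where (−)* denotes Hom_R(−, R). Then there is an isomorphism of R-modules Ext^1_R(X, Y) ≅ Ext^1_R(Y, X). -/

import Mathlib

open CategoryTheory

universe u

/-- `ModuleExt1 R M N` is the `R`-module `Ext¹_R(M, N)`. -/
noncomputable def ModuleExt1 (R : Type u) [CommRing R]
    (M N : Type u) [AddCommGroup M] [Module R M] [AddCommGroup N] [Module R N] :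
    ModuleCat.{u} R :=
  ((Ext R (ModuleCat.{u} R) 1).obj (Opposite.op (ModuleCat.of R M))).obj (ModuleCat.of R N)

section Aux

variable (R : Type u) [CommRing R]

theorem lemmaA (K P M W : Type u) [AddCommGroup K] [Module R K] [AddCommGroup P] [Module R P]
    [AddCommGroup M] [Module R M] [AddCommGroup W] [Module R W] [Module.Free R P]
    (i : K →ₗ[R] P) (p : P →ₗ[R] M)
    (hi : Function.Injective i) (hp : Function.Surjective p) (hex : Function.Exact i p) :
    Nonempty ((ModuleExt1 R M W) ≃ₗ[R]
      ((K →ₗ[R] W) ⧸ LinearMap.range (LinearMap.lcomp R W i))) := by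
  have hP : Projective (ModuleCat.of R P) :=
    ModuleCat.projective_of_free (Module.Free.chooseBasis R P)
  set Q : ProjectiveResolution (ModuleCat.of R K) := ProjectiveResolution.of _ with hQdef
  set πK : Q.complex.X 0 ⟶ ModuleCat.of R K := Q.π.f 0 with hπK
  have hdπK : Q.complex.d 1 0 ≫ πK = 0 := Q.complex_d_comp_π_f_zero
  set Xs : ℕ → ModuleCat.{u} R := fun n => match n with
    | 0 => ModuleCat.of R P
    | n+1 => Q.complex.X n with hXs
  set ds : ∀ n, Xs (n+1) ⟶ Xs n := fun n => match n with
    | 0 => πK ≫ (ModuleCat.ofHom i)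
    | n+1 => Q.complex.d (n+1) n with hds
  have sq : ∀ n, ds (n+1) ≫ ds n = 0 := fun n => match n with
    | 0 => by
        show Q.complex.d 1 0 ≫ (πK ≫ ModuleCat.ofHom i) = 0
        rw [← Category.assoc, hdπK, Limits.zero_comp]
    | n+1 => by
        show Q.complex.d (n+2) (n+1) ≫ Q.complex.d (n+1) n = 0
        simp
  set CC : ChainComplex (ModuleCat.{u} R) ℕ := ChainComplex.of Xs ds sq with hCC
  have hd10 : CC.d 1 0 = πK ≫ (ModuleCat.ofHom i) := ChainComplex.of_d _ _ 0
  have hdsucc : ∀ n, CC.d (n+2) (n+1) = Q.complex.d (n+1) n := fun n =>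
    ChainComplex.of_d _ _ (n+1)
  have hip : ModuleCat.ofHom i ≫ ModuleCat.ofHom p = 0 := by
    ext x
    exact (hex (i x)).2 ⟨x, rfl⟩
  have hπ0 : CC.d 1 0 ≫ ModuleCat.ofHom p = 0 := by
    rw [hd10, Category.assoc, hip, Limits.comp_zero]
  set πE : CC ⟶ (ChainComplex.single₀ (ModuleCat.{u} R)).obj (ModuleCat.of R M) :=
    (ChainComplex.toSingle₀Equiv CC (ModuleCat.of R M)).symm ⟨ModuleCat.ofHom p, hπ0⟩ with hπE
  have hqis : QuasiIso πE := by
    refine ⟨fun n => ?_⟩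
    cases n with
    | zero =>
      rw [ChainComplex.quasiIsoAt₀_iff, ShortComplex.quasiIso_iff_of_zeros']
      · refine (ShortComplex.exact_and_epi_g_iff_of_iso
          (S₂ := ShortComplex.mk (CC.d 1 0) (ModuleCat.ofHom p) hπ0) ?_).2 ⟨?_, ?_⟩
        · exact ShortComplex.isoMk (Iso.refl _) (Iso.refl _) (Iso.refl _)
            (by exact (Category.id_comp _).trans (Category.comp_id _).symm)
            (by simp [πE, ChainComplex.toSingle₀Equiv]; exact (Category.id_comp _).trans (Category.comp_id _).symm)
        · rw [ShortComplex.moduleCat_exact_iff_range_eq_ker]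
          show LinearMap.range (CC.d 1 0).hom = LinearMap.ker (ModuleCat.ofHom p).hom
          rw [hd10]
          have hsurj : Function.Surjective (πK) :=
            (ModuleCat.epi_iff_surjective (πK)).1 (inferInstanceAs (Epi (Q.π.f 0)))
          show LinearMap.range (i.comp (πK).hom) = LinearMap.ker p
          rw [LinearMap.range_comp, LinearMap.range_eq_top.2 hsurj, Submodule.map_top]
          exact (LinearMap.exact_iff.1 hex).symm
        · exact (ModuleCat.epi_iff_surjective (ModuleCat.ofHom p)).2 hp
      · rfl
      · rfl
      · rfl
    | succ n =>
      rw [quasiIsoAt_iff_exactAt']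
      · rw [HomologicalComplex.exactAt_iff' _ (n+2) (n+1) n (by simp) (by simp)]
        match n with
        | 0 =>
          rw [ShortComplex.moduleCat_exact_iff_range_eq_ker]
          show LinearMap.range (CC.d 2 1).hom = LinearMap.ker (CC.d 1 0).hom
          rw [hdsucc 0, hd10]
          show LinearMap.range (Q.complex.d 1 0).hom = LinearMap.ker (i.comp (πK).hom)
          rw [LinearMap.ker_comp, (LinearMap.ker_eq_bot.2 hi), Submodule.comap_bot]
          exact Q.exact₀.moduleCat_range_eq_ker
        | n+1 =>
          have hQ : (Q.complex.sc' (n+2) (n+1) n).Exact := by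
            have := Q.complex_exactAt_succ n
            rwa [HomologicalComplex.exactAt_iff' _ (n+2) (n+1) n (by simp) (by simp)] at this
          refine (ShortComplex.exact_iff_of_iso ?_).2 hQ
          refine ShortComplex.isoMk (Iso.refl _) (Iso.refl _) (Iso.refl _) ?_ ?_
          · simp only [Iso.refl_hom, Category.id_comp, Category.comp_id]
            exact (Category.id_comp _).trans ((hdsucc (n+1)).symm.trans (Category.comp_id _).symm)
          · simp only [Iso.refl_hom, Category.id_comp, Category.comp_id]
            exact (Category.id_comp _).trans ((hdsucc n).symm.trans (Category.comp_id _).symm)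
      · apply ChainComplex.exactAt_succ_single_obj
  set E : ProjectiveResolution (ModuleCat.of R M) :=
    { complex := CC
      projective := fun n => by
        match n with
        | 0 => exact hP
        | n+1 => exact Q.projective n
      π := πE
      quasiIso := hqis } with hE
  -- the cochain complex Hom(CC, W)
  set D : CochainComplex (ModuleCat.{u} R) ℕ :=
    CC.linearYonedaObj R (ModuleCat.of R W) with hD
  set S : ShortComplex (ModuleCat.{u} R) := D.sc' 0 1 2 with hS
  have iso1 : (ModuleExt1 R M W) ≅ D.homology 1 := E.isoExt 1 (ModuleCat.of R W)
  have iso2 : D.homology 1 ≅ S.homology :=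
    D.homologyIsoSc' 0 1 2 (by simp) (by simp)
  have iso3 : S.homology ≅ S.moduleCatLeftHomologyData.H := S.moduleCatHomologyIso
  have hSg : ∀ g : (CC.X 1 ⟶ ModuleCat.of R W), S.g g = CC.d 2 1 ≫ g := fun g => rfl
  have hSf : ∀ h : (CC.X 0 ⟶ ModuleCat.of R W), S.f h = CC.d 1 0 ≫ h := fun h => rfl
  set π₀ : Q.complex.X 0 →ₗ[R] K := πK.hom with hπ₀
  have hπ₀surj : Function.Surjective π₀ :=
    (ModuleCat.epi_iff_surjective (πK)).1 (inferInstanceAs (Epi (Q.π.f 0)))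
  have hkerπ₀ : LinearMap.ker π₀ = LinearMap.range (Q.complex.d 1 0).hom :=
    Q.exact₀.moduleCat_range_eq_ker.symm
  -- the map `Hom(K, W) → ker S.g`, `f ↦ f ∘ π₀`
  have humem : ∀ f : K →ₗ[R] W, (show S.X₂ from ModuleCat.ofHom (LinearMap.lcomp R W π₀ f))
      ∈ LinearMap.ker S.g.hom := by
    intro f
    rw [LinearMap.mem_ker]
    refine Eq.trans (hSg _) ?_
    rw [hdsucc 0]
    show (Q.complex.d 1 0 ≫ πK) ≫ ModuleCat.ofHom f = 0
    rw [hdπK, Limits.zero_comp]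
  let q₂ : (↥(LinearMap.ker S.g.hom)) → (CC.X 1 ⟶ ModuleCat.of R W) := Subtype.val
  set u : (K →ₗ[R] W) →ₗ[R] ↥(LinearMap.ker S.g.hom) :=
    LinearMap.codRestrict (LinearMap.ker S.g.hom)
      ((ModuleCat.homLinearEquiv (S := R)).symm.toLinearMap ∘ₗ LinearMap.lcomp R W π₀) humem with hu
  have huinj : Function.Injective u := by
    intro f f' hff'
    ext k
    obtain ⟨x, rfl⟩ := hπ₀surj k
    exact congrArg (fun (t : ↥(LinearMap.ker S.g.hom)) => q₂ t x) hff'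
  have husurj : Function.Surjective u := by
    rintro ⟨g, hg⟩
    let g' : CC.X 1 ⟶ ModuleCat.of R W := g
    have hg' : CC.d 2 1 ≫ g' = 0 := (hSg g').symm.trans (LinearMap.mem_ker.1 hg)
    have hg'' : Q.complex.d 1 0 ≫ g' = 0 := by rw [← hdsucc 0]; exact hg'
    have hle : LinearMap.ker π₀ ≤ LinearMap.ker g'.hom := by
      rw [hkerπ₀]
      rintro x ⟨y, rfl⟩
      exact congrArg (fun (t : Q.complex.X 1 ⟶ ModuleCat.of R W) => t y) hg''
    set e0 := LinearMap.quotKerEquivOfSurjective π₀ hπ₀surj with he0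
    set f : K →ₗ[R] W := ((LinearMap.ker π₀).liftQ
      g'.hom hle).comp (e0.symm : K →ₗ[R] _) with hf
    refine ⟨f, ?_⟩
    apply Subtype.ext
    show ModuleCat.ofHom (LinearMap.lcomp R W π₀ f) = g'
    ext x
    have hx : e0.symm (π₀ x) = Submodule.Quotient.mk x := by
      apply e0.injective
      rw [LinearEquiv.apply_symm_apply]
      rfl
    show (LinearMap.ker π₀).liftQ g'.hom hle (e0.symm (π₀ x)) = g' x
    rw [hx]
    rfl
  set e1 : (K →ₗ[R] W) ≃ₗ[R] ↥(LinearMap.ker S.g.hom) :=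
    LinearEquiv.ofBijective u ⟨huinj, husurj⟩ with he1
  have hmap : (LinearMap.range (LinearMap.lcomp R W i)).map (e1 : _ →ₗ[R] _)
      = LinearMap.range S.moduleCatToCycles := by
    have key : ∀ h : CC.X 0 ⟶ ModuleCat.of R W,
        e1 (LinearMap.lcomp R W i h.hom) = S.moduleCatToCycles h := by
      intro h
      apply Subtype.ext
      show ModuleCat.ofHom (LinearMap.lcomp R W π₀ (LinearMap.lcomp R W i h.hom)) = S.f h
      rw [hSf h, hd10]
      rfl
    apply le_antisymm
    · rintro x ⟨y, ⟨h, rfl⟩, rfl⟩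
      exact ⟨ModuleCat.ofHom h, (key _).symm⟩
    · rintro x ⟨h, rfl⟩
      exact ⟨LinearMap.lcomp R W i h.hom, ⟨h.hom, rfl⟩, key h⟩
  have equiv2 : (↥(LinearMap.ker S.g.hom) ⧸ LinearMap.range S.moduleCatToCycles) ≃ₗ[R]
      ((K →ₗ[R] W) ⧸ LinearMap.range (LinearMap.lcomp R W i)) :=
    (Submodule.Quotient.equiv _ _ e1 hmap).symm
  exact ⟨(iso1 ≪≫ iso2 ≪≫ iso3).toLinearEquiv ≪≫ₗ equiv2⟩

theorem claimC {K Qm X F : Type u} [AddCommGroup K] [Module R K] [AddCommGroup Qm] [Module R Qm]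
    [AddCommGroup X] [Module R X] [AddCommGroup F] [Module R F]
    [Module.Free R F] [Module.Finite R F]
    (j : K →ₗ[R] Qm)
    (hext : ∀ f : K →ₗ[R] R, ∃ h : Qm →ₗ[R] R, h.comp j = f)
    (a : K →ₗ[R] F) (b : F →ₗ[R] X) :
    b.comp a ∈ LinearMap.range (LinearMap.lcomp R X j) := by
  let bs := Module.Free.chooseBasis R F
  choose hh hhc using fun idx => hext ((bs.coord idx).comp a)
  let A : Qm →ₗ[R] F :=
    ((bs.equivFun.symm : (Module.Free.ChooseBasisIndex R F → R) →ₗ[R] F)).comp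
      (LinearMap.pi hh)
  have hA : A.comp j = a := by
    ext k
    show bs.equivFun.symm (fun idx => hh idx (j k)) = a k
    have h1 : (fun idx => hh idx (j k)) = fun idx => bs.repr (a k) idx := by
      funext idx
      exact LinearMap.congr_fun (hhc idx) k
    rw [h1]
    rw [Module.Basis.equivFun_symm_apply]
    exact bs.sum_repr (a k)
  exact ⟨b.comp A, by rw [LinearMap.lcomp_apply', LinearMap.comp_assoc, hA]⟩

noncomputable def flipEquiv (A B : Type u) [AddCommGroup A] [Module R A]
    [AddCommGroup B] [Module R B] :
    (A →ₗ[R] B →ₗ[R] R) ≃ₗ[R] (B →ₗ[R] A →ₗ[R] R) where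
  toFun f := f.flip
  invFun f := f.flip
  map_add' f g := by ext; rfl
  map_smul' c f := by ext; rfl
  left_inv f := LinearMap.flip_flip f
  right_inv f := LinearMap.flip_flip f

open Module in
noncomputable def dualityEquiv (X Y : Type u) [AddCommGroup X] [Module R X]
    [AddCommGroup Y] [Module R Y] [Module.IsReflexive R X] [Module.IsReflexive R Y] :
    (Module.Dual R X →ₗ[R] Y) ≃ₗ[R] (Module.Dual R Y →ₗ[R] X) :=
  (LinearEquiv.congrRight (Module.evalEquiv R Y)).trans
    ((flipEquiv R (Module.Dual R X) (Module.Dual R Y)).trans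
      (LinearEquiv.congrRight (Module.evalEquiv R X).symm))

lemma dualityEquiv_apply (X Y : Type u) [AddCommGroup X] [Module R X]
    [AddCommGroup Y] [Module R Y] [Module.IsReflexive R X] [Module.IsReflexive R Y]
    (f : Module.Dual R X →ₗ[R] Y) :
    dualityEquiv R X Y f = ((Module.evalEquiv R X).symm : _ →ₗ[R] X).comp f.dualMap := rfl

lemma dualityEquiv_symm_apply (X Y : Type u) [AddCommGroup X] [Module R X]
    [AddCommGroup Y] [Module R Y] [Module.IsReflexive R X] [Module.IsReflexive R Y]
    (g : Module.Dual R Y →ₗ[R] X) :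
    (dualityEquiv R X Y).symm g
      = ((Module.evalEquiv R Y).symm : _ →ₗ[R] Y).comp g.dualMap := rfl


end Aux

/-- **Lemma 3.4.**  Let `R` be a commutative noetherian ring and `X`, `Y` finitely generated
reflexive `R`-modules with `Ext¹_R(X, R) = 0 = Ext¹_R(Y, R)`, admitting short exact sequences
`0 → X* → P → X → 0` and `0 → Y* → Q → Y → 0` with `P`, `Q` finitely generated free
(i.e. the first syzygy of each of `X`, `Y` is its `R`-dual).  Then
`Ext¹_R(X, Y) ≅ Ext¹_R(Y, X)` as `R`-modules. -/
theorem ext_one_symmetry_of_special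
    (R : Type u) [CommRing R] [IsNoetherianRing R]
    (X Y : Type u) [AddCommGroup X] [Module R X] [AddCommGroup Y] [Module R Y]
    [Module.Finite R X] [Module.Finite R Y]
    [Module.IsReflexive R X] [Module.IsReflexive R Y]
    (hX : Subsingleton (ModuleExt1 R X R)) (hY : Subsingleton (ModuleExt1 R Y R))
    (P : Type u) [AddCommGroup P] [Module R P] [Module.Free R P] [Module.Finite R P]
    (Q : Type u) [AddCommGroup Q] [Module R Q] [Module.Free R Q] [Module.Finite R Q]
    (iX : Module.Dual R X →ₗ[R] P) (pX : P →ₗ[R] X)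
    (hiX : Function.Injective iX) (hpX : Function.Surjective pX)
    (hexactX : Function.Exact iX pX)
    (iY : Module.Dual R Y →ₗ[R] Q) (pY : Q →ₗ[R] Y)
    (hiY : Function.Injective iY) (hpY : Function.Surjective pY)
    (hexactY : Function.Exact iY pY) :
    Nonempty ((ModuleExt1 R X Y) ≃ₗ[R] (ModuleExt1 R Y X)) := by
  obtain ⟨eC⟩ := lemmaA R (Module.Dual R X) P X Y iX pX hiX hpX hexactX
  obtain ⟨eC'⟩ := lemmaA R (Module.Dual R Y) Q Y X iY pY hiY hpY hexactY
  have hextX : ∀ f : Module.Dual R X →ₗ[R] R, ∃ h : P →ₗ[R] R, h.comp iX = f := by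
    obtain ⟨eR⟩ := lemmaA R (Module.Dual R X) P X R iX pX hiX hpX hexactX
    haveI := Equiv.subsingleton (eR.symm.toEquiv)
    intro f
    have h0 : Submodule.Quotient.mk (p := LinearMap.range (LinearMap.lcomp R R iX)) f = 0 :=
      Subsingleton.elim _ _
    obtain ⟨h, hh⟩ := (Submodule.Quotient.mk_eq_zero _).1 h0
    exact ⟨h, hh⟩
  have hextY : ∀ f : Module.Dual R Y →ₗ[R] R, ∃ h : Q →ₗ[R] R, h.comp iY = f := by
    obtain ⟨eR⟩ := lemmaA R (Module.Dual R Y) Q Y R iY pY hiY hpY hexactY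
    haveI := Equiv.subsingleton (eR.symm.toEquiv)
    intro f
    have h0 : Submodule.Quotient.mk (p := LinearMap.range (LinearMap.lcomp R R iY)) f = 0 :=
      Subsingleton.elim _ _
    obtain ⟨h, hh⟩ := (Submodule.Quotient.mk_eq_zero _).1 h0
    exact ⟨h, hh⟩
  set e := dualityEquiv R X Y with he
  have hmap : (LinearMap.range (LinearMap.lcomp R Y iX)).map (e : _ →ₗ[R] _)
      = LinearMap.range (LinearMap.lcomp R X iY) := by
    apply le_antisymm
    · rintro g ⟨y, ⟨h, rfl⟩, rfl⟩
      have heq : e ((LinearMap.lcomp R Y iX) h)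
          = ((((Module.evalEquiv R X).symm : _ →ₗ[R] X).comp
              iX.dualMap).comp h.dualMap) := by
        rw [he, dualityEquiv_apply]
        ext φ
        rfl
      rw [LinearEquiv.coe_coe, heq]
      exact claimC R iY hextY h.dualMap _
    · rintro g ⟨h, rfl⟩
      refine Submodule.mem_map.2 ⟨e.symm ((LinearMap.lcomp R X iY) h), ?_, e.apply_symm_apply _⟩
      have heq : e.symm ((LinearMap.lcomp R X iY) h)
          = ((((Module.evalEquiv R Y).symm : _ →ₗ[R] Y).comp
              iY.dualMap).comp h.dualMap) := by
        rw [he, dualityEquiv_symm_apply]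
        ext φ
        rfl
      rw [heq]
      exact claimC R iX hextX h.dualMap _
  exact ⟨eC ≪≫ₗ Submodule.Quotient.equiv _ _ e hmap ≪≫ₗ eC'.symm⟩
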